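/- Let conv(x₀,…,xₘ) ⊆ ℝⁿ be a Farey-regular m-simplex. If conv(y₀,…,y_e) ⊆ ℝⁿ is a Farey-regular e-simplex with aff(y₀,…,y_e) = aff(x₀,…,x_e), then e ≤ m and conv(y₀,…,y_e,x_{e+1},…,xₘ) is a Farey-regular m-simplex. -/

import Mathlib

open scoped BigOperators

noncomputable section

/-- Embedding of a rational point of ℚⁿ into ℝⁿ. -/
def toR {n : ℕ} (x : Fin n → ℚ) : Fin n → ℝ := fun i => (x i : ℝ)

/-- Least common denominator of a rational point. -/
def den {n : ℕ} (x : Fin n → ℚ) : ℕ := Finset.univ.lcm fun i => (x i).den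

/-- Homogeneous correspondent x̃ = (den(x)·x, den(x)) ∈ ℤ^{n+1}. -/
def homog {n : ℕ} (x : Fin n → ℚ) : Fin (n + 1) → ℤ :=
  Fin.snoc (fun i => ((den x : ℚ) * x i).num) (den x)

/-- A rational d-simplex, given by its vertices, is Farey-regular if the vertices are
affinely independent and their homogeneous correspondents extend to a ℤ-basis of ℤ^{n+1}. -/
def IsFareyRegular {n d : ℕ} (v : Fin (d + 1) → Fin n → ℚ) : Prop :=
  AffineIndependent ℝ (fun i => toR (v i)) ∧
  ∃ (b : Module.Basis (Fin (n + 1)) ℤ (Fin (n + 1) → ℤ)) (ι : Fin (d + 1) → Fin (n + 1)),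
    Function.Injective ι ∧ ∀ i, b (ι i) = homog (v i)

/-- A rational segment conv(a,b) is Farey-regular. -/
def SegRegular {n : ℕ} (a b : Fin n → ℚ) : Prop := IsFareyRegular ![a, b]

/-- Maps in GL(n,ℤ) ⋉ ℤⁿ : x ↦ Mx + t with M an integer matrix with det ±1. -/
def IsUnimodularAffine {n : ℕ} (γ : (Fin n → ℝ) → Fin n → ℝ) : Prop :=
  ∃ (M : Matrix (Fin n) (Fin n) ℤ) (t : Fin n → ℤ), IsUnit M.det ∧
    ∀ x, γ x = fun i => (∑ j, (M i j : ℝ) * x j) + (t i : ℝ)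

/-- A rational affine space: an intersection of rational affine hyperplanes of ℝⁿ. -/
def IsRatAffineSpace {n : ℕ} (F : Set (Fin n → ℝ)) : Prop :=
  ∃ (ι : Type) (p : ι → Fin n → ℚ) (c : ι → ℚ), (∀ i, p i ≠ 0) ∧
    F = ⋂ i, {z | (∑ j, (p i j : ℝ) * z j) = (c i : ℝ)}

/-- Affine dimension of a subset of ℝⁿ. -/
def affDim {n : ℕ} (F : Set (Fin n → ℝ)) : ℕ :=
  Module.finrank ℝ (vectorSpan ℝ F)

/-- d_F: least denominator of a rational point of F. -/
def dF {n : ℕ} (F : Set (Fin n → ℝ)) : ℕ :=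
  sInf {d | ∃ v : Fin n → ℚ, toR v ∈ F ∧ den v = d}

/-- c_F: least denominator of a rational point v such that conv(v,v₀,…,v_e) is a
Farey-regular (e+1)-simplex for some v₀,…,v_e ∈ F ∩ ℚⁿ (e = dim F < n); c_F = 1 if dim F = n. -/
def cF {n : ℕ} (F : Set (Fin n → ℝ)) : ℕ :=
  if affDim F = n then 1 else
  sInf {c | ∃ (v : Fin n → ℚ) (w : Fin (affDim F + 1) → Fin n → ℚ),
    (∀ i, toR (w i) ∈ F) ∧ IsFareyRegular (Fin.cons v w) ∧ den v = c}

/-- Euclidean distance on ℝⁿ. -/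
def eudist {n : ℕ} (x y : Fin n → ℝ) : ℝ := Real.sqrt (∑ i, (x i - y i) ^ 2)

/-- The sequence a = x₀, x₁, …, x_{u+1} = b of consecutive vertices of the
Hirzebruch–Jung triangulation of the rational segment conv(a,b): each x_{i+1} is the
farthest rational point z from xᵢ in conv(a,b) such that conv(xᵢ,z) is Farey-regular. -/
def IsHJSeq {n : ℕ} (a b : Fin n → ℚ) {u : ℕ} (x : Fin (u + 2) → Fin n → ℚ) : Prop :=
  x 0 = a ∧ x (Fin.last (u + 1)) = b ∧
  ∀ i : Fin (u + 1),
    toR (x i.succ) ∈ segment ℝ (toR a) (toR b) ∧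
    SegRegular (x i.castSucc) (x i.succ) ∧
    ∀ z : Fin n → ℚ, toR z ∈ segment ℝ (toR a) (toR b) →
      SegRegular (x i.castSucc) z →
      eudist (toR z) (toR (x i.castSucc)) ≤ eudist (toR (x i.succ)) (toR (x i.castSucc))

/-- A regular triangulation of the rational segment conv(a,b), described by its
consecutive vertices a = y₀, …, y_{k+1} = b: consecutive 1-simplexes are Farey-regular. -/
def IsRegTriSeq {n : ℕ} (a b : Fin n → ℚ) {k : ℕ} (y : Fin (k + 2) → Fin n → ℚ) : Prop :=
  y 0 = a ∧ y (Fin.last (k + 1)) = b ∧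
  ∀ i : Fin (k + 1),
    toR (y i.succ) ∈ segment ℝ (toR (y i.castSucc)) (toR b) ∧
    SegRegular (y i.castSucc) (y i.succ)

/-- A rational half-line with rational origin v: {v + t(w - v) : t ≥ 0} for some rational w ≠ v. -/
def IsRatHalfLine {n : ℕ} (H : Set (Fin n → ℝ)) (v : Fin n → ℚ) : Prop :=
  ∃ w : Fin n → ℚ, w ≠ v ∧
    H = {P | ∃ t : ℝ, 0 ≤ t ∧ P = fun i => toR v i + t * (toR w i - toR v i)}


section SteinitzAux

/-! ### Auxiliary lemmas for `steinitz_farey_regular` -/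

lemma den_pos' {n : ℕ} (x : Fin n → ℚ) : 0 < den x := by
  rw [den, Nat.pos_iff_ne_zero]
  intro h
  rw [Finset.lcm_eq_zero_iff] at h
  obtain ⟨i, -, hi⟩ := h
  exact (x i).den_nz hi

lemma den_mul_int' {n : ℕ} (x : Fin n → ℚ) (i : Fin n) :
    ((((den x : ℚ) * x i).num : ℤ) : ℚ) = (den x : ℚ) * x i := by
  have hd : (x i).den ∣ den x := Finset.dvd_lcm (Finset.mem_univ i)
  obtain ⟨k, hk⟩ := hd
  have h : (den x : ℚ) * x i = ((k * (x i).num : ℤ) : ℚ) := by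
    push_cast
    rw [hk]
    push_cast
    rw [mul_comm ((x i).den : ℚ) (k : ℚ), mul_assoc]
    congr 1
    rw [Rat.mul_comm, Rat.mul_den_eq_num]
  rw [h, Rat.num_intCast]

lemma basis_cast_linearIndependent' {N : ℕ} (K : Type) [Field K] [CharZero K]
    (b : Module.Basis (Fin N) ℤ (Fin N → ℤ)) :
    LinearIndependent K (fun j => fun i => ((b j i : ℤ) : K)) := by
  have h1 : Invertible ((Pi.basisFun ℤ (Fin N)).toMatrix b) :=
    (Pi.basisFun ℤ (Fin N)).invertibleToMatrix b
  have h2 : IsUnit ((Pi.basisFun ℤ (Fin N)).toMatrix b).det :=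
    Matrix.isUnit_det_of_invertible _
  set A : Matrix (Fin N) (Fin N) K :=
    (Int.castRingHom K).mapMatrix (((Pi.basisFun ℤ (Fin N)).toMatrix b).transpose) with hA
  have hdet : IsUnit A.det := by
    rw [hA, ← RingHom.map_det, Matrix.det_transpose]
    exact h2.map (Int.castRingHom K)
  have hrows := Matrix.linearIndependent_rows_iff_isUnit.mpr
    ((Matrix.isUnit_iff_isUnit_det A).mpr hdet)
  have heq : (fun j => fun i => ((b j i : ℤ) : K)) = fun j => A j := by
    funext j i
    simp [hA, RingHom.mapMatrix_apply, Matrix.map_apply, Matrix.transpose_apply,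
      Module.Basis.toMatrix, Pi.basisFun_repr]
  rw [heq]
  exact hrows

/-- Cast of an integral basis of `ℤ^N` to a `K`-basis of `K^N`. -/
def basisCast' {N : ℕ} (K : Type) [Field K] [CharZero K] [NeZero N]
    (b : Module.Basis (Fin N) ℤ (Fin N → ℤ)) : Module.Basis (Fin N) K (Fin N → K) :=
  basisOfLinearIndependentOfCardEqFinrank (basis_cast_linearIndependent' K b)
    (by simp [Module.finrank_pi])

lemma basisCast_apply' {N : ℕ} (K : Type) [Field K] [CharZero K] [NeZero N]
    (b : Module.Basis (Fin N) ℤ (Fin N → ℤ)) (j : Fin N) :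
    basisCast' K b j = fun i => ((b j i : ℤ) : K) := by
  rw [basisCast', coe_basisOfLinearIndependentOfCardEqFinrank]

def castLinZ' {N : ℕ} (K : Type) [Field K] [CharZero K] : (Fin N → ℤ) →ₗ[ℤ] (Fin N → K) where
  toFun v := fun i => (v i : K)
  map_add' u v := by funext i; simp
  map_smul' z v := by funext i; simp [zsmul_eq_mul]

lemma cast_repr' {N : ℕ} (K : Type) [Field K] [CharZero K] [NeZero N]
    (b : Module.Basis (Fin N) ℤ (Fin N → ℤ)) (v : Fin N → ℤ) (t : Fin N) :
    (basisCast' K b).repr (fun i => ((v i : ℤ) : K)) t = ((b.repr v t : ℤ) : K) := by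
  let f : (Fin N → ℤ) →ₗ[ℤ] K :=
    ((Finsupp.lapply t : (Fin N →₀ K) →ₗ[K] K).restrictScalars ℤ) ∘ₗ
      (((basisCast' K b).repr.toLinearMap).restrictScalars ℤ) ∘ₗ castLinZ' K
  let g : (Fin N → ℤ) →ₗ[ℤ] K :=
    (Int.castAddHom K).toIntLinearMap ∘ₗ (Finsupp.lapply t : (Fin N →₀ ℤ) →ₗ[ℤ] ℤ) ∘ₗ
      b.repr.toLinearMap
  have hfg : f = g := by
    apply b.ext
    intro s
    show (basisCast' K b).repr (castLinZ' K (b s)) t = ((b.repr (b s) t : ℤ) : K)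
    rw [show castLinZ' K (b s) = basisCast' K b s by rw [basisCast_apply']; rfl]
    simp [Finsupp.single_apply]
  exact LinearMap.congr_fun hfg v

/-- Purity: an integer vector lying in the real span of part of an integral basis lies in
the integral span of that part. -/
lemma pure_lemma' {N : ℕ} [NeZero N] (b : Module.Basis (Fin N) ℤ (Fin N → ℤ)) {k : ℕ}
    (σ : Fin k → Fin N) (v : Fin N → ℤ)
    (hv : (fun i => ((v i : ℤ) : ℝ)) ∈ Submodule.span ℝ
        (Set.range fun j => fun i => ((b (σ j) i : ℤ) : ℝ))) :
    v ∈ Submodule.span ℤ (Set.range fun j => b (σ j)) := by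
  have h1 : (Set.range fun j => fun i => ((b (σ j) i : ℤ) : ℝ))
      = (basisCast' ℝ b) '' (Set.range σ) := by
    rw [show (fun j => fun i => ((b (σ j) i : ℤ) : ℝ)) = (basisCast' ℝ b) ∘ σ by
      funext j; rw [Function.comp_apply, basisCast_apply']]
    exact Set.range_comp _ _
  rw [h1] at hv
  have h2 := (Module.Basis.mem_span_image (basisCast' ℝ b)).mp hv
  rw [show (Set.range fun j => b (σ j)) = ⇑b '' (Set.range σ) by
    rw [show (fun j => b (σ j)) = ⇑b ∘ σ from rfl]; exact Set.range_comp _ _]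
  rw [Module.Basis.mem_span_image]
  intro t ht
  apply h2
  simp only [Finset.coe_sort_coe, Finsupp.mem_support_iff, Finset.mem_coe] at ht ⊢
  rw [cast_repr']
  exact_mod_cast ht

lemma homog_cast_real' {n : ℕ} (x : Fin n → ℚ) :
    (fun i => ((homog x i : ℤ) : ℝ)) = (den x : ℝ) • (Fin.snoc (toR x) 1 : Fin (n+1) → ℝ) := by
  funext i
  induction i using Fin.lastCases with
  | last => simp [homog]
  | cast i =>
    simp only [homog, Fin.snoc_castSucc, Pi.smul_apply, smul_eq_mul, toR]
    have h := den_mul_int' x i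
    have h2 : ((((den x : ℚ) * x i).num : ℤ) : ℝ) = (((den x : ℚ) * x i : ℚ) : ℝ) := by
      exact_mod_cast congrArg (fun q : ℚ => (q : ℝ)) h
    rw [h2]; push_cast; ring

lemma sum_smul_snoc' {n : ℕ} {ι : Type*} (s : Finset ι) (w : ι → ℝ) (p : ι → Fin n → ℝ)
    (c : ι → ℝ) :
    ∑ i ∈ s, w i • (Fin.snoc (p i) (c i) : Fin (n+1) → ℝ)
      = Fin.snoc (∑ i ∈ s, w i • p i) (∑ i ∈ s, w i * c i) := by
  funext t
  induction t using Fin.lastCases with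
  | last => simp [Finset.sum_apply]
  | cast i => simp [Finset.sum_apply]

lemma mem_span_snoc' {n k : ℕ} {p : Fin n → ℝ} {q : Fin k → Fin n → ℝ}
    (h : p ∈ affineSpan ℝ (Set.range q)) :
    (Fin.snoc p 1 : Fin (n+1) → ℝ) ∈
      Submodule.span ℝ (Set.range fun j => (Fin.snoc (q j) 1 : Fin (n+1) → ℝ)) := by
  obtain ⟨w, hw, hp⟩ := eq_affineCombination_of_mem_affineSpan_of_fintype h
  rw [Finset.affineCombination_eq_linear_combination _ _ _ hw] at hp
  have h2 : (Fin.snoc p 1 : Fin (n+1) → ℝ)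
      = ∑ j, w j • (Fin.snoc (q j) 1 : Fin (n+1) → ℝ) := by
    rw [sum_smul_snoc', ← hp, show (∑ j, w j * (1:ℝ)) = 1 by simpa using hw]
  rw [h2]
  exact Submodule.sum_mem _ fun j _ =>
    Submodule.smul_mem _ _ (Submodule.subset_span ⟨j, rfl⟩)

lemma span_smul_family' {M : Type*} [AddCommGroup M] [Module ℝ M] {k : ℕ}
    (f : Fin k → M) (a : Fin k → ℝ) (ha : ∀ j, a j ≠ 0) :
    Submodule.span ℝ (Set.range fun j => a j • f j) = Submodule.span ℝ (Set.range f) := by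
  apply le_antisymm <;> rw [Submodule.span_le] <;> rintro _ ⟨j, rfl⟩
  · exact Submodule.smul_mem _ _ (Submodule.subset_span ⟨j, rfl⟩)
  · have h : f j = (a j)⁻¹ • (a j • f j) := by rw [inv_smul_smul₀ (ha j)]
    rw [h]
    exact Submodule.smul_mem _ _ (Submodule.subset_span ⟨j, rfl⟩)

lemma homog_cast_mem_span' {n k : ℕ} (v : Fin n → ℚ) (q : Fin k → Fin n → ℚ)
    (h : toR v ∈ affineSpan ℝ (Set.range fun j => toR (q j))) :
    (fun i => ((homog v i : ℤ) : ℝ)) ∈ Submodule.span ℝ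
      (Set.range fun j => fun i => ((homog (q j) i : ℤ) : ℝ)) := by
  rw [homog_cast_real']
  rw [show (fun j => fun i => ((homog (q j) i : ℤ) : ℝ))
      = fun j => ((den (q j) : ℝ) • (Fin.snoc (toR (q j)) 1 : Fin (n+1) → ℝ)) by
    funext j; rw [homog_cast_real']]
  rw [span_smul_family' _ _ (fun j => by
    exact_mod_cast Nat.pos_iff_ne_zero.mp (den_pos' (q j)))]
  exact Submodule.smul_mem _ _ (mem_span_snoc' h)

lemma affineIndependent_of_snoc' {n k : ℕ} {p : Fin k → Fin n → ℝ}
    (h : LinearIndependent ℝ (fun j => (Fin.snoc (p j) 1 : Fin (n+1) → ℝ))) :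
    AffineIndependent ℝ p := by
  rw [affineIndependent_iff]
  intro s w hw0 hws
  refine linearIndependent_iff'.mp h s w ?_
  rw [sum_smul_snoc']
  rw [hws]
  have h0 : ∑ i ∈ s, w i * 1 = 0 := by simpa using hw0
  rw [h0]
  ext t
  induction t using Fin.lastCases with
  | last => simp
  | cast i => simp

end SteinitzAux

/-- Steinitz exchange for Farey-regular simplexes: if conv(x₀,…,xₘ) is a Farey-regular
m-simplex and conv(y₀,…,y_e) is a Farey-regular e-simplex with
aff(y₀,…,y_e) = aff(x₀,…,x_e), then e ≤ m and conv(y₀,…,y_e,x_{e+1},…,xₘ) is a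
Farey-regular m-simplex. -/
theorem steinitz_farey_regular {n m e : ℕ}
    (x : Fin (m + 1) → Fin n → ℚ) (y : Fin (e + 1) → Fin n → ℚ)
    (hx : IsFareyRegular x) (hy : IsFareyRegular y)
    (haff : affineSpan ℝ (Set.range fun i => toR (y i)) =
      affineSpan ℝ {P | ∃ i : Fin (m + 1), (i : ℕ) ≤ e ∧ P = toR (x i)}) :
    ∃ _ : e ≤ m,
      IsFareyRegular (fun i : Fin (m + 1) =>
        if hi : (i : ℕ) ≤ e then y ⟨(i : ℕ), Nat.lt_succ_of_le hi⟩ else x i) := by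
    classical
  obtain ⟨hxInd, b, ι, hι, hbι⟩ := hx
  obtain ⟨hyInd, c, κ, hκ, hcκ⟩ := hy
  haveI : NeZero (n + 1) := ⟨n.succ_ne_zero⟩
  -- Step A : e ≤ m
  have hyrank : Module.finrank ℝ (vectorSpan ℝ (Set.range fun i => toR (y i))) = e :=
    hyInd.finrank_vectorSpan (by simp)
  have hem : e ≤ m := by
    set g : Fin (min e m + 1) → Fin n → ℝ := fun j => toR (x ⟨j, by omega⟩) with hg
    have hset : {P | ∃ i : Fin (m + 1), (i : ℕ) ≤ e ∧ P = toR (x i)} = Set.range g := by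
      ext P
      constructor
      · rintro ⟨i, hie, rfl⟩
        refine ⟨⟨(i : ℕ), by have := i.isLt; omega⟩, ?_⟩
        simp only [hg]
      · rintro ⟨j, rfl⟩
        exact ⟨⟨(j : ℕ), by have := j.isLt; omega⟩,
          by show (j : ℕ) ≤ e; have := j.isLt; omega, rfl⟩
    have hle : Module.finrank ℝ (vectorSpan ℝ (Set.range g)) ≤ min e m :=
      finrank_vectorSpan_range_le ℝ g (by simp)
    have heq : vectorSpan ℝ (Set.range fun i => toR (y i)) = vectorSpan ℝ (Set.range g) := by
      rw [← direction_affineSpan, ← direction_affineSpan, haff, hset]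
    have h6 : Module.finrank ℝ (vectorSpan ℝ (Set.range g)) = e := by rw [← heq, hyrank]
    have h7 : e ≤ min e m := h6.symm.trans_le hle
    omega
  have hem1 : e + 1 ≤ m + 1 := by omega
  set σx : Fin (e+1) → Fin (m+1) := Fin.castLE hem1 with hσx
  set σ : Fin (e+1) → Fin (n+1) := fun j => ι (σx j) with hσ
  have hσinj : Function.Injective σ := fun a b' h => Fin.castLE_injective hem1 (hι h)
  have hsetX : {P | ∃ i : Fin (m + 1), (i : ℕ) ≤ e ∧ P = toR (x i)}
      = Set.range fun j => toR (x (σx j)) := by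
    ext P
    constructor
    · rintro ⟨i, hie, rfl⟩
      exact ⟨⟨(i : ℕ), by omega⟩, congrArg (fun t => toR (x t)) (Fin.ext rfl)⟩
    · rintro ⟨j, rfl⟩
      exact ⟨σx j, by simpa [hσx] using Nat.lt_succ_iff.mp j.isLt, rfl⟩
  have haff2 : affineSpan ℝ (Set.range fun i => toR (y i))
      = affineSpan ℝ (Set.range fun j => toR (x (σx j))) := by rw [haff, hsetX]
  -- Purity : memberships
  have hy_mem : ∀ j : Fin (e+1),
      homog (y j) ∈ Submodule.span ℤ (Set.range fun j' => b (σ j')) := by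
    intro j
    apply pure_lemma'
    have h1 : toR (y j) ∈ affineSpan ℝ (Set.range fun j' => toR (x (σx j'))) := by
      rw [← haff2]; exact subset_affineSpan ℝ _ ⟨j, rfl⟩
    have h2 := homog_cast_mem_span' (y j) (fun j' => x (σx j')) h1
    rw [show (fun j' : Fin (e+1) => fun i => ((b (σ j') i : ℤ) : ℝ))
        = fun j' => fun i => ((homog (x (σx j')) i : ℤ) : ℝ) by
      funext j' i; rw [hσ, hbι]]
    exact h2
  have hx_mem : ∀ j : Fin (e+1),
      b (σ j) ∈ Submodule.span ℤ (Set.range fun j' : Fin (e+1) => homog (y j')) := by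
    intro j
    rw [hσ, hbι]
    have h1 : toR (x (σx j)) ∈ affineSpan ℝ (Set.range fun i => toR (y i)) := by
      rw [haff2]; exact subset_affineSpan ℝ _ ⟨j, rfl⟩
    have h2 := homog_cast_mem_span' (x (σx j)) y h1
    have h3 := pure_lemma' c κ (homog (x (σx j))) (by
      rw [show (fun j' : Fin (e+1) => fun i => ((c (κ j') i : ℤ) : ℝ))
          = fun j' => fun i => ((homog (y j') i : ℤ) : ℝ) by funext j' i; rw [hcκ]]
      exact h2)
    rw [show (Set.range fun j' : Fin (e+1) => homog (y j'))
        = Set.range fun j' => c (κ j') from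
      congrArg Set.range (funext fun j' => (hcκ j').symm)]
    exact h3
  -- Construction of the new basis
  set Rσ : Set (Fin (n+1)) := Set.range σ with hRσ
  set vP : (Fin (e+1) ⊕ ↥(Rσᶜ)) → (Fin (n+1) → ℤ) :=
    Sum.elim (fun j => homog (y j)) (fun t => b ↑t) with hvP
  have hliY : LinearIndependent ℤ (fun j : Fin (e+1) => homog (y j)) := by
    rw [show (fun j : Fin (e+1) => homog (y j)) = ⇑c ∘ κ by
      funext j; exact (hcκ j).symm]
    exact c.linearIndependent.comp κ hκ
  have hliB : LinearIndependent ℤ (fun t : ↥(Rσᶜ) => b ↑t) :=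
    b.linearIndependent.comp _ Subtype.val_injective
  have hrange1 : (Set.range fun j => b (σ j)) = ⇑b '' Rσ := Set.range_comp ⇑b σ
  have hrange2 : (Set.range fun t : ↥(Rσᶜ) => b ↑t) = ⇑b '' (Rσᶜ) := by
    rw [show (fun t : ↥(Rσᶜ) => b ↑t) = ⇑b ∘ (Subtype.val) from rfl, Set.range_comp,
      Subtype.range_coe]
  have hspanY : Submodule.span ℤ (Set.range fun j : Fin (e+1) => homog (y j))
      = Submodule.span ℤ (Set.range fun j => b (σ j)) := by
    apply le_antisymm
    · rw [Submodule.span_le]; rintro _ ⟨j, rfl⟩; exact hy_mem j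
    · rw [Submodule.span_le]; rintro _ ⟨j, rfl⟩; exact hx_mem j
  have hdisj : Disjoint (Submodule.span ℤ (Set.range fun j : Fin (e+1) => homog (y j)))
      (Submodule.span ℤ (Set.range fun t : ↥(Rσᶜ) => b ↑t)) := by
    rw [hspanY, hrange1, hrange2]
    exact b.linearIndependent.disjoint_span_image disjoint_compl_right
  have hli : LinearIndependent ℤ vP := hliY.sum_type hliB hdisj
  have hsp : ⊤ ≤ Submodule.span ℤ (Set.range vP) := by
    rw [← b.span_eq]
    apply Submodule.span_le.mpr
    rintro _ ⟨t, rfl⟩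
    by_cases ht : t ∈ Rσ
    · obtain ⟨j, rfl⟩ := ht
      have h1 : Submodule.span ℤ (Set.range fun j' : Fin (e+1) => homog (y j'))
          ≤ Submodule.span ℤ (Set.range vP) := by
        apply Submodule.span_mono
        rintro _ ⟨j', rfl⟩
        exact ⟨Sum.inl j', rfl⟩
      exact h1 (hx_mem j)
    · exact Submodule.subset_span ⟨Sum.inr ⟨t, ht⟩, rfl⟩
  set τ : (Fin (e+1) ⊕ ↥(Rσᶜ)) ≃ Fin (n+1) :=
    (Equiv.sumCongr (Equiv.ofInjective σ hσinj) (Equiv.refl _)).trans (Equiv.Set.sumCompl Rσ)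
    with hτ
  set b' : Module.Basis (Fin (n+1)) ℤ (Fin (n+1) → ℤ) := (Module.Basis.mk hli hsp).reindex τ with hb'def
  have hb'σ : ∀ j : Fin (e+1), b' (σ j) = homog (y j) := by
    intro j
    have hτj : τ (Sum.inl j) = σ j := by
      simp [hτ, Equiv.Set.sumCompl_apply_inl, Equiv.ofInjective_apply]
    have hsymm : τ.symm (σ j) = Sum.inl j := by
      rw [Equiv.symm_apply_eq]; exact hτj.symm
    rw [hb'def, Module.Basis.reindex_apply, hsymm, Module.Basis.mk_apply]
    rfl
  have hb'out : ∀ t, t ∉ Rσ → b' t = b t := by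
    intro t ht
    have hτt : τ (Sum.inr ⟨t, ht⟩) = t := by
      simp [hτ, Equiv.Set.sumCompl_apply_inr]
    have hsymm : τ.symm t = Sum.inr ⟨t, ht⟩ := by
      rw [Equiv.symm_apply_eq]; exact hτt.symm
    rw [hb'def, Module.Basis.reindex_apply, hsymm, Module.Basis.mk_apply]
    rfl
  have hb'ι : ∀ i : Fin (m+1), b' (ι i)
      = homog (if hi : (i : ℕ) ≤ e then y ⟨(i : ℕ), Nat.lt_succ_of_le hi⟩ else x i) := by
    intro i
    by_cases hi : (i : ℕ) ≤ e
    · rw [dif_pos hi]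
      have hii : ι i = σ ⟨(i : ℕ), Nat.lt_succ_of_le hi⟩ := by
        rw [hσ]
        exact congrArg ι (Fin.ext rfl)
      rw [hii, hb'σ]
    · rw [dif_neg hi]
      have hnot : ι i ∉ Rσ := by
        rintro ⟨j, hj⟩
        apply hi
        have h2 : σx j = i := hι hj
        have h3 : (i : ℕ) = (j : ℕ) := by rw [← h2]; simp [hσx]
        have := j.isLt
        omega
      rw [hb'out _ hnot, hbι]
  refine ⟨hem, ?_, b', ι, hι, hb'ι⟩
  -- Affine independence of the mixed family
  apply affineIndependent_of_snoc'
  set z : Fin (m+1) → Fin n → ℚ := fun i =>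
    if hi : (i : ℕ) ≤ e then y ⟨(i : ℕ), Nat.lt_succ_of_le hi⟩ else x i with hz
  have hcast : LinearIndependent ℝ (fun i : Fin (m+1) => basisCast' ℝ b' (ι i)) :=
    (basisCast' ℝ b').linearIndependent.comp ι hι
  have hkey : ∀ i : Fin (m+1), basisCast' ℝ b' (ι i)
      = (den (z i) : ℝ) • (Fin.snoc (toR (z i)) 1 : Fin (n+1) → ℝ) := by
    intro i
    rw [basisCast_apply']
    rw [show b' (ι i) = homog (z i) from hb'ι i]
    exact homog_cast_real' (z i)
  set u : Fin (m+1) → ℝˣ := fun i =>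
    Units.mk0 (den (z i) : ℝ)
      (by exact_mod_cast Nat.pos_iff_ne_zero.mp (den_pos' (z i))) with hu
  have h1 : LinearIndependent ℝ
      (u • fun i : Fin (m+1) => (Fin.snoc (toR (z i)) 1 : Fin (n+1) → ℝ)) := by
    have heq : (u • fun i : Fin (m+1) => (Fin.snoc (toR (z i)) 1 : Fin (n+1) → ℝ))
        = fun i => basisCast' ℝ b' (ι i) := by
      funext i
      rw [Pi.smul_apply', hkey i]
      rfl
    rw [heq]
    exact hcast
  have h2 := h1.units_smul u⁻¹
  have heq2 : (u⁻¹ • u • fun i : Fin (m+1) => (Fin.snoc (toR (z i)) 1 : Fin (n+1) → ℝ))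
      = fun i : Fin (m+1) => (Fin.snoc (toR (z i)) 1 : Fin (n+1) → ℝ) := by
    funext i
    simp only [Pi.smul_apply', Pi.inv_apply]
    exact inv_smul_smul (u i) _
  rw [heq2] at h2
  exact h2
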